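/- Let T_n be a random recursive tree, Π a uniformly random bijection from [n] to an alphabet U_n independent of T_n, and T̃_n = Π T_n the randomly relabeled tree. Let B_ε be any labeling-equivariant set-valued function of labeled trees (i.e., τ B_ε(t) = B_ε(τ t) for every bijection τ of U_n) such that for every labeled tree t with vertex set U_n, P(Π(1) ∈ B_ε(T̃_n) | T̃_n = t) ≥ 1 - ε. Then for any isomorphism ρ: [n] → U_n with ρ T_n = T*_n, the frequentist coverage P(ρ(1) ∈ B_ε(T*_n)) ≥ 1 - ε holds. -/

import Mathlib

open scoped Classical
open SimpleGraph Finset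

/-- A recursive tree on `Fin n`: a tree such that the nodes `{0, ..., k-1}` induce a
connected subgraph for every `k ≥ 1`. Node `0` is the root (first arrival). -/
def IsRecursive (n : ℕ) (G : SimpleGraph (Fin n)) : Prop :=
  G.IsTree ∧ ∀ k : ℕ, 1 ≤ k → (G.induce {i : Fin n | i.val < k}).Connected

theorem stmt8 (n : ℕ) (hn : 0 < n) (ε : ℝ)
    (P : SimpleGraph (Fin n) → ℝ) (hP0 : ∀ G, 0 ≤ P G)
    (hsupp : ∀ G, P G ≠ 0 → IsRecursive n G)
    (hP1 : ∑ G, P G = 1)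
    (B : SimpleGraph (Fin n) → Finset (Fin n))
    (hequiv : ∀ (τ : Equiv.Perm (Fin n)) (t : SimpleGraph (Fin n)),
      (B t).image τ = B (t.map τ.toEmbedding))
    (hcred : ∀ t : SimpleGraph (Fin n),
      (1 - ε) * (∑ G, ∑ π : Equiv.Perm (Fin n),
          if G.map π.toEmbedding = t then P G else 0) ≤
        ∑ G, ∑ π : Equiv.Perm (Fin n),
          if G.map π.toEmbedding = t ∧ π ⟨0, hn⟩ ∈ B t then P G else 0)
    (ρ : SimpleGraph (Fin n) → Equiv.Perm (Fin n)) :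
    1 - ε ≤ ∑ G, if ρ G ⟨0, hn⟩ ∈ B (G.map (ρ G).toEmbedding) then P G else 0 := by
  -- Key: by equivariance, the event "π(root) ∈ B(πG)" does not depend on π.
  have key : ∀ (G : SimpleGraph (Fin n)) (π : Equiv.Perm (Fin n)),
      (π ⟨0, hn⟩ ∈ B (G.map π.toEmbedding)) ↔ (⟨0, hn⟩ : Fin n) ∈ B G := by
    intro G π
    rw [← hequiv π G, Finset.mem_image]
    constructor
    · rintro ⟨a, ha, hax⟩
      rwa [← π.injective hax]
    · intro h; exact ⟨_, h, rfl⟩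
  have hgoal : (∑ G, if ρ G ⟨0, hn⟩ ∈ B (G.map (ρ G).toEmbedding) then P G else 0)
      = ∑ G, if (⟨0, hn⟩ : Fin n) ∈ B G then P G else 0 := by
    refine Finset.sum_congr rfl fun G _ => ?_
    simp only [key G (ρ G)]
  rw [hgoal]
  set N : ℝ := (Fintype.card (Equiv.Perm (Fin n)) : ℝ) with hNdef
  have hN : 0 < N := by
    rw [hNdef]
    exact_mod_cast Fintype.card_pos (α := Equiv.Perm (Fin n))
  -- total mass summed over all t
  have hA : (∑ t : SimpleGraph (Fin n), ∑ G, ∑ π : Equiv.Perm (Fin n),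
      if G.map π.toEmbedding = t then P G else 0) = N := by
    rw [Finset.sum_comm]
    have h1 : ∀ G : SimpleGraph (Fin n),
        (∑ t : SimpleGraph (Fin n), ∑ π : Equiv.Perm (Fin n),
          if G.map π.toEmbedding = t then P G else 0) = N * P G := by
      intro G
      rw [Finset.sum_comm]
      have h2 : ∀ π : Equiv.Perm (Fin n),
          (∑ t : SimpleGraph (Fin n), if G.map π.toEmbedding = t then P G else 0) = P G := by
        intro π
        rw [Finset.sum_eq_single (G.map π.toEmbedding)]
        · simp
        · intro t _ ht; exact if_neg (fun h => ht h.symm)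
        · simp
      simp [h2, Finset.sum_const, hNdef, mul_comm]
    rw [Finset.sum_congr rfl (fun G _ => h1 G), ← Finset.mul_sum, hP1, mul_one]
  have hB : (∑ t : SimpleGraph (Fin n), ∑ G, ∑ π : Equiv.Perm (Fin n),
      if G.map π.toEmbedding = t ∧ π ⟨0, hn⟩ ∈ B t then P G else 0)
      = N * ∑ G, if (⟨0, hn⟩ : Fin n) ∈ B G then P G else 0 := by
    rw [Finset.sum_comm]
    have h1 : ∀ G : SimpleGraph (Fin n),
        (∑ t : SimpleGraph (Fin n), ∑ π : Equiv.Perm (Fin n),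
          if G.map π.toEmbedding = t ∧ π ⟨0, hn⟩ ∈ B t then P G else 0)
        = N * (if (⟨0, hn⟩ : Fin n) ∈ B G then P G else 0) := by
      intro G
      rw [Finset.sum_comm]
      have h2 : ∀ π : Equiv.Perm (Fin n),
          (∑ t : SimpleGraph (Fin n),
            if G.map π.toEmbedding = t ∧ π ⟨0, hn⟩ ∈ B t then P G else 0)
          = if (⟨0, hn⟩ : Fin n) ∈ B G then P G else 0 := by
        intro π
        rw [Finset.sum_eq_single (G.map π.toEmbedding)]
        · simp only [key G π, eq_self_iff_true, true_and]
        · intro t _ ht; exact if_neg (fun h => ht h.1.symm)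
        · simp
      simp only [h2]; simp [Finset.sum_const, hNdef, mul_comm]
    rw [Finset.sum_congr rfl (fun G _ => h1 G), ← Finset.mul_sum]
  have hsum : (1 - ε) * N ≤ N * ∑ G, if (⟨0, hn⟩ : Fin n) ∈ B G then P G else 0 := by
    calc (1 - ε) * N
        = ∑ t : SimpleGraph (Fin n), (1 - ε) * (∑ G, ∑ π : Equiv.Perm (Fin n),
            if G.map π.toEmbedding = t then P G else 0) := by
          rw [← Finset.mul_sum, hA]
      _ ≤ ∑ t : SimpleGraph (Fin n), ∑ G, ∑ π : Equiv.Perm (Fin n),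
            if G.map π.toEmbedding = t ∧ π ⟨0, hn⟩ ∈ B t then P G else 0 :=
          Finset.sum_le_sum fun t _ => hcred t
      _ = _ := hB
  rw [mul_comm N] at hsum
  exact le_of_mul_le_mul_right hsum hN
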